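/- Let A be a saturated class of morphisms of simplicial sets with the right cancellation property for monomorphisms. Then A contains all left horn inclusions h^n_0 : Λ[n,0] → Δ[n] for n ≥ 2 if and only if A contains all left cone inclusions c_n : C_n → Δ[n] for n ≥ 2. -/

import Mathlib

open CategoryTheory CategoryTheory.GrothendieckTopology CategoryTheory.Limits Simplicial SSet Opposite

noncomputable section

namespace BousfieldPaper

/-! ## Basic lifting-property classes of simplicial sets -/

/-- A Kan fibration: a map with the right lifting property against all horn inclusions. -/
def KanFibration {S T : SSet.{0}} (p : S ⟶ T) : Prop :=
  ∀ (n : ℕ) (i : Fin (n + 2)), HasLiftingProperty (Λ[n + 1, i].ι) p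

/-- An acyclic (trivial) Kan fibration: a map with the right lifting property against
all boundary inclusions. -/
def TrivialKanFibration {S T : SSet.{0}} (p : S ⟶ T) : Prop :=
  ∀ n : ℕ, HasLiftingProperty (∂Δ[n].ι) p

/-- The class of maps with the right lifting property against every map in `T`. -/
def rlpOf {C : Type*} [Category C] (T : MorphismProperty C) : MorphismProperty C :=
  fun _ _ p => ∀ ⦃A B : C⦄ (i : A ⟶ B), T i → HasLiftingProperty i p

/-- The class of maps with the left lifting property against every map in `T`. -/
def llpOf {C : Type*} [Category C] (T : MorphismProperty C) : MorphismProperty C :=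
  fun _ _ i => ∀ ⦃S T' : C⦄ (p : S ⟶ T'), T p → HasLiftingProperty i p

/-- The saturation `llp(rlp(S))` of a class of maps. -/
def saturationOf {C : Type*} [Category C] (S : MorphismProperty C) : MorphismProperty C :=
  llpOf (rlpOf S)

/-- The class of all horn inclusions (up to isomorphism of arrows). -/
def HornClass : MorphismProperty SSet.{0} := fun _ _ f =>
  ∃ (n : ℕ) (i : Fin (n + 2)), Nonempty (Arrow.mk f ≅ Arrow.mk (Λ[n + 1, i].ι))

/-- The class of left horn inclusions `Λ[n,0] → Δ[n]`, `n ≥ 2` (up to isomorphism of arrows). -/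
def LeftHornClass : MorphismProperty SSet.{0} := fun _ _ f =>
  ∃ n : ℕ, 2 ≤ n ∧ Nonempty (Arrow.mk f ≅ Arrow.mk (Λ[n, 0].ι))

/-- Anodyne maps: the saturation of the class of horn inclusions. -/
def Anodyne : MorphismProperty SSet.{0} := saturationOf HornClass

/-- A weak homotopy equivalence of simplicial sets (in the Kan--Quillen sense):
a map admitting a factorization as an anodyne map followed by an acyclic Kan fibration. -/
def WeakHomotopyEquivalence {S T : SSet.{0}} (f : S ⟶ T) : Prop :=
  ∃ (Z : SSet.{0}) (i : S ⟶ Z) (p : Z ⟶ T),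
    Anodyne i ∧ TrivialKanFibration p ∧ i ≫ p = f

/-! ## Saturated classes -/

/-- `f` is a retract of `g` in the arrow category. -/
def IsRetractOf {C : Type*} [Category C] {X Y X' Y' : C} (f : X ⟶ Y) (g : X' ⟶ Y') : Prop :=
  ∃ (i : Arrow.mk f ⟶ Arrow.mk g) (r : Arrow.mk g ⟶ Arrow.mk f), i ≫ r = 𝟙 _

/-- The inclusion functor of the subposet `{x | x < j}` of `J`. -/
def iioFunctor {J : Type} [Preorder J] (j : J) : Set.Iio j ⥤ J :=
  Monotone.functor (f := fun x => (x : J)) (fun _ _ h => h)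

/-- The cocone on the restriction of `F : J ⥤ C` to `{x | x < j}` with apex `F.obj j`. -/
def coconeBelow {J : Type} [Preorder J] {C : Type*} [Category C]
    (F : J ⥤ C) (j : J) : Cocone (iioFunctor j ⋙ F) where
  pt := F.obj j
  ι :=
    { app := fun x => F.map (homOfLE (le_of_lt x.2))
      naturality := fun x y g => by
        dsimp [iioFunctor, Monotone.functor]
        rw [← F.map_comp, Category.comp_id]
        congr 1 }

/-- A class of morphisms of simplicial sets is *saturated* (weakly saturated) if it is closed
under pushouts (cobase change), retracts and transfinite compositions. -/
structure IsSaturated (A : MorphismProperty SSet.{0}) : Prop where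
  pushout : ∀ ⦃X Y X' Y' : SSet.{0}⦄ (f : X ⟶ Y) (u : X ⟶ X') (v : Y ⟶ Y') (f' : X' ⟶ Y'),
    IsPushout f u v f' → A f → A f'
  retract : ∀ ⦃X Y X' Y' : SSet.{0}⦄ (f : X ⟶ Y) (g : X' ⟶ Y'),
    IsRetractOf f g → A g → A f
  transfinite : ∀ (J : Type) (_ : LinearOrder J) (_ : SuccOrder J) (_ : OrderBot J)
    (_ : WellFoundedLT J) (F : J ⥤ SSet.{0}) (c : Cocone F) (_ : IsColimit c),
    (∀ j : J, ¬IsMax j → A (F.map (homOfLE (Order.le_succ j)))) →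
    (∀ j : J, Order.IsSuccLimit j → Nonempty (IsColimit (coconeBelow F j))) →
    A (c.ι.app ⊥)

/-- Right cancellation property for monomorphisms. -/
def RightCancel (A : MorphismProperty SSet.{0}) : Prop :=
  ∀ ⦃X Y Z : SSet.{0}⦄ (u : X ⟶ Y) (v : Y ⟶ Z),
    Mono u → Mono v → A (u ≫ v) → A u → A v

/-- Left cancellation property for monomorphisms. -/
def LeftCancel (A : MorphismProperty SSet.{0}) : Prop :=
  ∀ ⦃X Y Z : SSet.{0}⦄ (u : X ⟶ Y) (v : Y ⟶ Z),
    Mono u → Mono v → A (u ≫ v) → A v → A u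

/-- 3-for-2 for monomorphisms: both left and right cancellation. -/
def ThreeForTwo (A : MorphismProperty SSet.{0}) : Prop :=
  RightCancel A ∧ LeftCancel A

/-! ## The left cone, the spine, and related subcomplexes of the standard simplex -/

/-- The left cone `C n ⊆ Δ[n]`: the union of the images of the initial edges `0 → i`. -/
def coneSub (n : ℕ) : Subfunctor Δ[n] where
  obj m := {α | ∃ i : ℕ, 1 ≤ i ∧ i ≤ n ∧
    ∀ j, (stdSimplex.asOrderHom α j : ℕ) = 0 ∨ (stdSimplex.asOrderHom α j : ℕ) = i}
  map := by
    rintro m m' g α ⟨i, hi1, hin, h⟩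
    exact ⟨i, hi1, hin, fun j => h _⟩

/-- The spine `Sp n ⊆ Δ[n]`: the union of the images of the edges `i → i+1`. -/
def spineSub (n : ℕ) : Subfunctor Δ[n] where
  obj m := {α | ∃ i : ℕ, i + 1 ≤ n ∧
    ∀ j, (stdSimplex.asOrderHom α j : ℕ) = i ∨ (stdSimplex.asOrderHom α j : ℕ) = i + 1}
  map := by
    rintro m m' g α ⟨i, hi, h⟩
    exact ⟨i, hi, fun j => h _⟩

/-- The union `(SpC) n ⊆ Δ[n]` of the images of the `2`-simplices `{0, i, i+1}`, `0 < i < n`. -/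
def spcSub (n : ℕ) : Subfunctor Δ[n] where
  obj m := {α | ∃ i : ℕ, 0 < i ∧ i + 1 ≤ n ∧
    ∀ j, (stdSimplex.asOrderHom α j : ℕ) = 0 ∨ (stdSimplex.asOrderHom α j : ℕ) = i ∨ (stdSimplex.asOrderHom α j : ℕ) = i + 1}
  map := by
    rintro m m' g α ⟨i, h₀, h₁, h⟩
    exact ⟨i, h₀, h₁, fun j => h _⟩

/-- The canonical inclusion `k n : C n → Λ[n, 0]` of the left cone into the left horn. -/
def coneToHorn (n : ℕ) (hn : 2 ≤ n) : ((coneSub n).toFunctor : SSet.{0}) ⟶ Λ[n, 0] where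
  app m := ↾fun α => by
    refine ⟨α.1, ?_⟩
    obtain ⟨i, hi1, hin, h⟩ := α.2
    intro hu
    rw [Set.eq_univ_iff_forall] at hu
    obtain ⟨kv, hkv0, hkvi, hkvlt⟩ : ∃ kv : ℕ, kv ≠ 0 ∧ kv ≠ i ∧ kv < n + 1 := by
      rcases eq_or_ne i 1 with hc | hc
      · exact ⟨2, by omega, by omega, by omega⟩
      · exact ⟨1, by omega, by omega, by omega⟩
    rcases hu ⟨kv, hkvlt⟩ with hr | h0
    · obtain ⟨j, hj⟩ := hr
      have hval := congrArg Fin.val hj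
      rcases h j with h' | h' <;> simp_all
    · have := congrArg Fin.val (Set.mem_singleton_iff.1 h0)
      simp_all

/-- The nerve `IΔ^n` of the free groupoid (codiscrete groupoid) on `{0, …, n}`:
its `m`-simplices are all (not necessarily monotone) functions `Fin (m+1) → Fin (n+1)`. -/
def IDelta (n : ℕ) : SSet.{0} where
  obj m := Fin (m.unop.len + 1) → Fin (n + 1)
  map f := ↾fun α => α ∘ f.unop.toOrderHom

/-- The canonical inclusion `Δ[n] → IΔ^n`. -/
def iDeltaIncl (n : ℕ) : (Δ[n] : SSet.{0}) ⟶ IDelta n where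
  app m := ↾fun α => ⇑(stdSimplex.asOrderHom α)

/-- The vertex `k : Δ[0] → IΔ^n`. -/
def iDeltaVertex (n : ℕ) (k : Fin (n + 1)) : (Δ[0] : SSet.{0}) ⟶ IDelta n where
  app m := ↾fun _ => fun _ => k


/-! ## Bisimplicial sets, the box product and the slash construction -/

/-- Bisimplicial sets: presheaves of sets on `Δ × Δ`. -/
abbrev BSSet : Type 1 := (SimplexCategory × SimplexCategory)ᵒᵖ ⥤ Type

/-- The box product `A □ B` of two simplicial sets: `(A □ B)_{n,m} = A_n × B_m`. -/
def box (A B : SSet.{0}) : BSSet where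
  obj nm := A.obj (op nm.unop.1) × B.obj (op nm.unop.2)
  map f := ↾fun p => ⟨A.map f.unop.1.op p.1, B.map f.unop.2.op p.2⟩

/-- The box product, functorially in its second variable. -/
def boxFunctor (A : SSet.{0}) : SSet.{0} ⥤ BSSet where
  obj B := box A B
  map g :=
    { app := fun nm => ↾fun p => ⟨p.1, g.app _ p.2⟩
      naturality := fun nm nm' f => by
        ext p
        exact Prod.ext rfl (NatTrans.naturality_apply g f.unop.2.op p.2 :) }

/-- The box product is natural in its first variable. -/
def boxHomLeft {A A' : SSet.{0}} (f : A ⟶ A') (B : SSet.{0}) :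
    (boxFunctor A).obj B ⟶ (boxFunctor A').obj B where
  app nm := ↾fun p => ⟨f.app _ p.1, p.2⟩
  naturality nm nm' g := by
    ext p
    exact Prod.ext (NatTrans.naturality_apply f g.unop.1.op p.1 :) rfl

lemma boxHomLeft_natural {A A' : SSet.{0}} (f : A ⟶ A') {B B' : SSet.{0}} (g : B ⟶ B') :
    (boxFunctor A).map g ≫ boxHomLeft f B' = boxHomLeft f B ≫ (boxFunctor A').map g := rfl

/-- The simplicial set `A \ X` with `m`-simplices the bisimplicial maps `A □ Δ[m] → X`. -/
def slash (A : SSet.{0}) (X : BSSet) : SSet.{0} :=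
  SSet.stdSimplex.op ⋙ ((boxFunctor A).op ⋙ yoneda.obj X)

/-- Functoriality (contravariance) of `A \ X` in `A`. -/
def slashMap {A A' : SSet.{0}} (f : A ⟶ A') (X : BSSet) : slash A' X ⟶ slash A X :=
  Functor.whiskerLeft SSet.stdSimplex.op
    (Functor.whiskerRight (NatTrans.op
      { app := fun B => boxHomLeft f B
        naturality := fun _ _ g => (boxHomLeft_natural f g).symm }) (yoneda.obj X))

lemma slashMap_id (A : SSet.{0}) (X : BSSet) : slashMap (𝟙 A) X = 𝟙 (slash A X) := rfl

lemma slashMap_comp {A A' A'' : SSet.{0}} (f : A ⟶ A') (g : A' ⟶ A'') (X : BSSet) :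
    slashMap (f ≫ g) X = slashMap g X ≫ slashMap f X := rfl


/-! ## Columns, Reedy fibrancy, Segal and Bousfield maps -/

/-- The `n`-th column `X_n := Δ[n] \ X` of a bisimplicial set. -/
def col (n : ℕ) (X : BSSet) : SSet.{0} := slash Δ[n] X

/-- The face map `d_i : X_{n+1} → X_n` between columns. -/
def colδ {n : ℕ} (i : Fin (n + 2)) (X : BSSet) : col (n + 1) X ⟶ col n X :=
  slashMap (SSet.stdSimplex.map (SimplexCategory.δ i)) X

/-- The degeneracy map `s_i : X_n → X_{n+1}` between columns. -/
def colσ {n : ℕ} (i : Fin (n + 1)) (X : BSSet) : col n X ⟶ col (n + 1) X :=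
  slashMap (SSet.stdSimplex.map (SimplexCategory.σ i)) X

/-- A bisimplicial set is `v`-fibrant (Reedy fibrant) if `f \ X` is a Kan fibration for
every monomorphism `f` of simplicial sets. -/
def VFibrant (X : BSSet) : Prop :=
  ∀ ⦃A B : SSet.{0}⦄ (f : A ⟶ B), Mono f → KanFibration (slashMap f X)

/-- The `n`-th Bousfield map `β_n = c_n \ X : X_n → C_n \ X`. -/
def bousfieldMap (n : ℕ) (X : BSSet) : col n X ⟶ slash (coneSub n).toFunctor X :=
  slashMap (coneSub n).ι X

/-- The `n`-th Segal map `ξ_n = sp_n \ X : X_n → Sp_n \ X`. -/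
def segalMap (n : ℕ) (X : BSSet) : col n X ⟶ slash (spineSub n).toFunctor X :=
  slashMap (spineSub n).ι X

/-- A Bousfield-Segal space: a `v`-fibrant bisimplicial set whose Bousfield maps `β_n`,
`n ≥ 2`, are weak homotopy equivalences. -/
def IsBSegal (X : BSSet) : Prop :=
  VFibrant X ∧ ∀ n : ℕ, 2 ≤ n → WeakHomotopyEquivalence (bousfieldMap n X)

/-- A Segal space: a `v`-fibrant bisimplicial set whose Segal maps `ξ_n`,
`n ≥ 2`, are weak homotopy equivalences. -/
def IsSegal (X : BSSet) : Prop :=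
  VFibrant X ∧ ∀ n : ℕ, 2 ≤ n → WeakHomotopyEquivalence (segalMap n X)

/-- The map `IΔ^1 \ X → X_0` induced by the vertex `{0} : Δ[0] → IΔ^1`. -/
def completenessMap (X : BSSet) : slash (IDelta 1) X ⟶ col 0 X :=
  slashMap (iDeltaVertex 1 0) X

/-- A complete Bousfield-Segal space. -/
def IsCompleteBSegal (X : BSSet) : Prop :=
  IsBSegal X ∧ WeakHomotopyEquivalence (completenessMap X)

/-- A bisimplicial set is homotopically constant if every map of the simplex category
induces a weak homotopy equivalence between the corresponding columns. -/
def HomotopicallyConstant (X : BSSet) : Prop :=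
  ∀ ⦃a b : SimplexCategory⦄ (f : a ⟶ b),
    WeakHomotopyEquivalence (slashMap (SSet.stdSimplex.map f) X)

/-! ## Vertices, edges and the fraction operation -/

/-- The vertices of a simplicial set. -/
def vert (S : SSet.{0}) : Type := S.obj (op (SimplexCategory.mk 0))

/-- Two vertices of a simplicial set lie in the same connected component, i.e. they have
equal classes in `π₀`. -/
def hSim (S : SSet.{0}) (a b : vert S) : Prop :=
  Relation.EqvGen (fun v w : vert S => ∃ e : S.obj (op (SimplexCategory.mk 1)),
    SimplicialObject.δ S 1 e = v ∧ SimplicialObject.δ S 0 e = w) a b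

/-- The edge `0 → i` of the left cone `C n`. -/
def coneEdge (n : ℕ) (i : Fin (n + 1)) (hi : i ≠ 0) :
    (Δ[1] : SSet.{0}) ⟶ (coneSub n).toFunctor where
  app m := ↾fun β => by
    refine ⟨(SSet.stdSimplex.map (SimplexCategory.mkOfLe 0 i (Fin.zero_le i))).app m β, ?_⟩
    have hne : (i : ℕ) ≠ 0 := fun h => hi (by apply Fin.ext; simpa using h)
    refine ⟨(i : ℕ), by omega, i.is_le, fun j => ?_⟩
    have key : ∀ k : Fin 2,
        (((SimplexCategory.mkOfLe (0 : Fin (n + 1)) i (Fin.zero_le i)).toOrderHom k : Fin (n+1)) : ℕ) = 0 ∨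
        (((SimplexCategory.mkOfLe (0 : Fin (n + 1)) i (Fin.zero_le i)).toOrderHom k : Fin (n+1)) : ℕ) = i := by
      intro k
      match k with
      | 0 => left; rfl
      | 1 => right; rfl
    exact key _
  naturality m m' g := by
    ext β
    apply Subtype.ext
    exact NatTrans.naturality_apply (SSet.stdSimplex.map
      (SimplexCategory.mkOfLe 0 i (Fin.zero_le i))) g β

variable (X : BSSet)

/-- Vertex component of the restriction along the edge `0 → 2` of `C₂` (the "numerator"). -/
def eF (w : vert (slash (coneSub 2).toFunctor X)) : vert (col 1 X) :=
  (slashMap (coneEdge 2 2 (by decide)) X).app _ w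

/-- Vertex component of the restriction along the edge `0 → 1` of `C₂` (the "denominator"). -/
def eG (w : vert (slash (coneSub 2).toFunctor X)) : vert (col 1 X) :=
  (slashMap (coneEdge 2 1 (by decide)) X).app _ w

/-- Vertex component of the face map `d_i : X_1 → X_0`. -/
def dV (i : Fin 2) (f : vert (col 1 X)) : vert (col 0 X) := (colδ i X).app _ f

/-- Vertex component of the degeneracy `s_0 : X_0 → X_1`; `oneV X x` is `1_x`. -/
def oneV (x : vert (col 0 X)) : vert (col 1 X) := (colσ 0 X).app _ x

/-- The fraction operation determined by a section `μ₂` of the Bousfield map `β₂`: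
`f/g := d₀ (μ₂ (f, g))`. -/
def fracV (μ₂ : slash (coneSub 2).toFunctor X ⟶ col 2 X)
    (w : vert (slash (coneSub 2).toFunctor X)) : vert (col 1 X) :=
  (colδ 0 X).app _ (μ₂.app _ w)

lemma dV_oneV (x : vert (col 0 X)) (i : Fin 2) : dV X i (oneV X x) = x := by
  have h : colσ (0 : Fin 1) X ≫ colδ i X = 𝟙 (col 0 X) := by
    erw [colδ, colσ, ← slashMap_comp, ← Functor.map_comp]
    have : SimplexCategory.δ i ≫ SimplexCategory.σ (0 : Fin 1) = 𝟙 (SimplexCategory.mk 0) := by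
      fin_cases i
      · exact SimplexCategory.δ_comp_σ_self
      · exact SimplexCategory.δ_comp_σ_succ
    erw [this, CategoryTheory.Functor.map_id, slashMap_id]; rfl
  exact congrArg (fun (t : col 0 X ⟶ col 0 X) => t.app (op (SimplexCategory.mk 0)) x)
    h

/-- The identity morphism `1_x` as an element of the hom-space `X₁(x,x)`. -/
def idHom (x : vert (col 0 X)) :
    {f : vert (col 1 X) // dV X 1 f = x ∧ dV X 0 f = x} :=
  ⟨oneV X x, dV_oneV X x 1, dV_oneV X x 0⟩


/-! ## Cellularity, pushouts of coproducts, finite compositions of pushouts -/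

/-- `f` is a pushout (cobase change) of `g`. -/
def IsPushoutOf {C : Type*} [Category C] {A B X Y : C} (g : A ⟶ B) (f : X ⟶ Y) : Prop :=
  ∃ (u : A ⟶ X) (v : B ⟶ Y), IsPushout g u v f

/-- `f` is a pushout of a coproduct of maps belonging to the class `S`. -/
def IsPushoutOfCoproductOf (S : MorphismProperty SSet.{0}) {P Q : SSet.{0}} (f : P ⟶ Q) : Prop :=
  ∃ (ι : Type) (A B : ι → SSet.{0}) (g : ∀ i, A i ⟶ B i),
    (∀ i, S (g i)) ∧
      IsPushoutOf (Limits.Sigma.desc (fun i => g i ≫ Limits.Sigma.ι B i) : (∐ A) ⟶ (∐ B)) f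

/-- `f` is cellular with respect to the class `S`: it is a (transfinite, here `ℕ`-indexed)
composition of pushouts of coproducts of maps of `S`. -/
def IsCellularIn (S : MorphismProperty SSet.{0}) {X Y : SSet.{0}} (f : X ⟶ Y) : Prop :=
  ∃ (F : ℕ ⥤ SSet.{0}) (c : Cocone F) (_ : IsColimit c) (e₀ : F.obj 0 ≅ X) (e : c.pt ≅ Y),
    (∀ m : ℕ, IsPushoutOfCoproductOf S (F.map (homOfLE (Nat.le_succ m)))) ∧
      f = e₀.inv ≫ c.ι.app 0 ≫ e.hom

/-- `f` is a finite composition of pushouts of `g`. -/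
inductive FinCompPushoutsOf {A B : SSet.{0}} (g : A ⟶ B) : ∀ {X Y : SSet.{0}}, (X ⟶ Y) → Prop where
  | of {X Y : SSet.{0}} (f : X ⟶ Y) : IsPushoutOf g f → FinCompPushoutsOf g f
| comp {X Y Z : SSet.{0}} (f₁ : X ⟶ Y) (f₂ : Y ⟶ Z) :
      IsPushoutOf g f₁ → FinCompPushoutsOf g f₂ → FinCompPushoutsOf g (f₁ ≫ f₂)

/-! ## Lattice operations on subpresheaves -/

variable {C : Type*} [Category C]

/-- Intersection of two subpresheaves. -/
def subInf {F : Cᵒᵖ ⥤ Type} (G G' : Subfunctor F) : Subfunctor F where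
  obj U := G.obj U ∩ G'.obj U
  map i := fun _ hx => ⟨G.map i hx.1, G'.map i hx.2⟩

/-- Union of two subpresheaves. -/
def subSup {F : Cᵒᵖ ⥤ Type} (G G' : Subfunctor F) : Subfunctor F where
  obj U := G.obj U ∪ G'.obj U
  map i := by
    rintro x (hx | hx)
    · exact Or.inl (G.map i hx)
    · exact Or.inr (G'.map i hx)

lemma subInf_le_left {F : Cᵒᵖ ⥤ Type} (G G' : Subfunctor F) : subInf G G' ≤ G :=
  fun _ => Set.inter_subset_left

lemma le_subSup_left {F : Cᵒᵖ ⥤ Type} (G G' : Subfunctor F) : G ≤ subSup G G' :=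
  fun _ => Set.subset_union_left

/-! ## The coface `d¹` and the left cone -/

/-- The coface map `d¹ : Δ[n] → Δ[n+1]`. -/
def d1Map (n : ℕ) : (Δ[n] : SSet.{0}) ⟶ Δ[n + 1] :=
  SSet.stdSimplex.map (SimplexCategory.δ 1)

/-- The restriction of `d¹` to a map `C n → C (n+1) ∩ d¹[Δ[n]]`. -/
def coneToInter (n : ℕ) : ((coneSub n).toFunctor : SSet.{0}) ⟶
    (subInf (coneSub (n + 1)) (Subfunctor.range (d1Map n))).toFunctor where
  app m := ↾fun α => by
    refine ⟨(d1Map n).app m α.1, ?_, ⟨α.1, rfl⟩⟩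
    obtain ⟨i, hi1, hin, h⟩ := α.2
    refine ⟨i + 1, by omega, by omega, fun j => ?_⟩
    have key : stdSimplex.asOrderHom ((d1Map n).app m α.1) j
        = (1 : Fin (n + 2)).succAbove (stdSimplex.asOrderHom α.1 j) := rfl
    rcases h j with h' | h'
    · left
      have h0 : stdSimplex.asOrderHom α.1 j = 0 := by
        apply Fin.ext; exact h'
      rw [key, h0, Fin.succAbove_of_castSucc_lt]
      · simp
      · simp
    · right
      rw [key, Fin.succAbove_of_le_castSucc]
      · simp [Fin.val_succ, h']
      · rw [Fin.le_def]
        simpa using by omega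
  naturality m m' g := by
    ext α
    apply Subtype.ext
    exact NatTrans.naturality_apply (d1Map n) g α.1

/-! ## Horizontally constant bisimplicial sets and closure properties -/

/-- `p₁* A`: the horizontally constant bisimplicial set with `(p₁* A)_{n,m} = A_n`. -/
def pHorizontal (A : SSet.{0}) : BSSet where
  obj nm := A.obj (op nm.unop.1)
  map f := A.map f.unop.1.op

/-- A class of maps of bisimplicial sets is stable under pullbacks. -/
def StableUnderPullbacksB (F : MorphismProperty BSSet) : Prop :=
  ∀ ⦃W X Y Z : BSSet⦄ (p' : W ⟶ X) (f' : W ⟶ Z) (f : X ⟶ Y) (p : Z ⟶ Y),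
    IsPullback p' f' f p → F f → F f'

/-- A class of maps of bisimplicial sets is stable under retracts. -/
def StableUnderRetractsB (F : MorphismProperty BSSet) : Prop :=
  ∀ ⦃X Y X' Y' : BSSet⦄ (f : X ⟶ Y) (g : X' ⟶ Y'), IsRetractOf f g → F g → F f

/-- A class of maps of bisimplicial sets is closed under sequential (inverse) limits:
limits of towers of arrows belonging to the class again belong to the class. -/
def ClosedUnderSequentialLimitsB (F : MorphismProperty BSSet) : Prop :=
  ∀ (G : ℕᵒᵖ ⥤ Arrow BSSet), (∀ n : ℕᵒᵖ, F (G.obj n).hom) →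
    ∀ (c : Cone G), IsLimit c → F c.pt.hom


/-! ### Auxiliary machinery for Statement 2 -/

section Statement2Aux

/-- An explicit successor structure on `Fin (m+1)`. -/
def finSuccOrder (m : ℕ) : SuccOrder (Fin (m+1)) where
  succ j := if h : (j:ℕ)+1 < m+1 then ⟨(j:ℕ)+1, h⟩ else j
  le_succ j := by split_ifs <;> simp [Fin.le_def]
  max_of_succ_le {j} h := by
    split_ifs at h with h'
    · rw [Fin.le_def] at h; simp only [Fin.val_mk] at h; omega
    · intro b _; rw [Fin.le_def]; omega
  succ_le_of_lt {a b} h := by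
    rw [Fin.lt_def] at h; split_ifs with h' <;> rw [Fin.le_def] <;> simp <;> omega

variable {A : MorphismProperty SSet.{0}}

lemma A_of_arrowIso (hA : IsSaturated A) {W X Y Z : SSet.{0}} {f : W ⟶ X} {g : Y ⟶ Z}
    (e : Arrow.mk f ≅ Arrow.mk g) (hg : A g) : A f :=
  hA.retract f g ⟨e.hom, e.inv, e.hom_inv_id⟩ hg

lemma A_id (hA : IsSaturated A) (X : SSet.{0}) : A (𝟙 X) := by
  have tX : IsTerminal (0 : Fin 1) :=
    IsTerminal.ofUniqueHom (fun Y => homOfLE (le_of_eq (Subsingleton.elim Y 0)))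
      (fun Y m => Subsingleton.elim _ _)
  exact hA.transfinite (Fin 1) inferInstance (finSuccOrder 0) inferInstance
    (inferInstanceAs (WellFoundedLT (Fin 1)))
    ((Functor.const (Fin 1)).obj X) (coconeOfDiagramTerminal tX _)
    (colimitOfDiagramTerminal tX _)
    (fun j hj => absurd (fun b _ => le_of_eq (Subsingleton.elim b j)) hj)
    (fun j hj => absurd (fun b _ => le_of_eq (Subsingleton.elim j b)) hj.1)

lemma A_isIso (hA : IsSaturated A) {X Y : SSet.{0}} (f : X ⟶ Y) [IsIso f] : A f := by
  refine A_of_arrowIso hA ?_ (A_id hA X)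
  exact Arrow.isoMk (Iso.refl X) (asIso f).symm (by simp)

/-- A chain of two composable maps, as data for a `Fin 3`-indexed functor. -/
def chainObj (X Y Z : SSet.{0}) : Fin 3 → SSet.{0} := fun i => match i with
  | ⟨0, _⟩ => X
  | ⟨1, _⟩ => Y
  | ⟨2, _⟩ => Z

def chainMap {X Y Z : SSet.{0}} (f : X ⟶ Y) (g : Y ⟶ Z) :
    ∀ (i j : Fin 3), i ≤ j → (chainObj X Y Z i ⟶ chainObj X Y Z j) := fun i j hij => match i, j, hij with
  | ⟨0, _⟩, ⟨0, _⟩, _ => 𝟙 X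
  | ⟨0, _⟩, ⟨1, _⟩, _ => f
  | ⟨0, _⟩, ⟨2, _⟩, _ => f ≫ g
  | ⟨1, _⟩, ⟨1, _⟩, _ => 𝟙 Y
  | ⟨1, _⟩, ⟨2, _⟩, _ => g
  | ⟨2, _⟩, ⟨2, _⟩, _ => 𝟙 Z
  | ⟨1, _⟩, ⟨0, _⟩, h => absurd h (by rw [Fin.mk_le_mk]; omega)
  | ⟨2, _⟩, ⟨0, _⟩, h => absurd h (by rw [Fin.mk_le_mk]; omega)
  | ⟨2, _⟩, ⟨1, _⟩, h => absurd h (by rw [Fin.mk_le_mk]; omega)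

def chain {X Y Z : SSet.{0}} (f : X ⟶ Y) (g : Y ⟶ Z) : Fin 3 ⥤ SSet.{0} where
  obj := chainObj X Y Z
  map {i j} h := chainMap f g i j (leOfHom h)
  map_id j := by
    fin_cases j <;> rfl
  map_comp {i j k} h1 h2 := by
    have hij := leOfHom h1; have hjk := leOfHom h2
    fin_cases i <;> fin_cases j <;> fin_cases k <;>
      first
        | (exact absurd hij (by decide))
        | (exact absurd hjk (by decide))
        | (exact (Category.id_comp _).symm)
        | (exact (Category.comp_id _).symm)
        | rfl

lemma A_comp (hA : IsSaturated A) {X Y Z : SSet.{0}} {f : X ⟶ Y} {g : Y ⟶ Z}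
    (hf : A f) (hg : A g) : A (f ≫ g) := by
  have tX : IsTerminal (2 : Fin 3) :=
    IsTerminal.ofUniqueHom (fun Y => homOfLE (Fin.le_last Y)) (fun Y m => Subsingleton.elim _ _)
  have key := hA.transfinite (Fin 3) inferInstance (finSuccOrder 2) inferInstance
    (inferInstanceAs (WellFoundedLT (Fin 3)))
    (chain f g) (coconeOfDiagramTerminal tX _) (colimitOfDiagramTerminal tX _)
    ?_ ?_
  · exact key
  · intro j hj
    fin_cases j
    · have h1 : ∀ (jj : Fin 3) (hle : (0 : Fin 3) ≤ jj), jj = 1 →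
          A ((chain f g).map (homOfLE hle)) := by
        rintro jj hle rfl; exact hf
      exact h1 _ _ rfl
    · have h1 : ∀ (jj : Fin 3) (hle : (1 : Fin 3) ≤ jj), jj = 2 →
          A ((chain f g).map (homOfLE hle)) := by
        rintro jj hle rfl; exact hg
      exact h1 _ _ rfl
    · exact absurd (fun b _ => Fin.le_last b) hj
  · intro j hj
    exfalso
    fin_cases j
    · exact hj.1 (fun b _ => Fin.zero_le b)
    · exact hj.2 0 ⟨by decide, fun c h1 h2 => by fin_cases c <;> revert h1 h2 <;> decide⟩
    · exact hj.2 1 ⟨by decide, fun c h1 h2 => by fin_cases c <;> revert h1 h2 <;> decide⟩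

def codeN (S : Finset ℕ) : ℕ := ∑ i ∈ S, 2^i

lemma codeN_mono {S T : Finset ℕ} (h : S ⊆ T) : codeN S ≤ codeN T :=
  Finset.sum_le_sum_of_subset h

lemma two_pow_le_codeN {S : Finset ℕ} {m : ℕ} (hm : m ∈ S) : 2^m ≤ codeN S :=
  Finset.single_le_sum (fun i _ => Nat.zero_le _) hm

lemma codeN_range (m : ℕ) : codeN (Finset.range m) = 2^m - 1 := by
  induction m with
  | zero => simp [codeN]
  | succ k ih => rw [codeN, Finset.sum_range_succ, ← codeN, ih]; have := Nat.one_le_two_pow (n := k); omega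

lemma codeN_lt {S : Finset ℕ} {m : ℕ} (h : ∀ i ∈ S, i < m) : codeN S < 2^m := by
  have : codeN S ≤ codeN (Finset.range m) := codeN_mono (fun i hi => Finset.mem_range.2 (h i hi))
  rw [codeN_range] at this
  have := Nat.one_le_two_pow (n := m); omega

lemma codeN_eq_zero {S : Finset ℕ} (h : codeN S = 0) : S = ∅ := by
  by_contra hne
  obtain ⟨a, ha⟩ := Finset.nonempty_iff_ne_empty.2 hne
  have := two_pow_le_codeN ha
  have := Nat.one_le_two_pow (n := a); omega

lemma codeN_max_eq {S T : Finset ℕ} (hS : S.Nonempty) (hT : T.Nonempty)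
    (h : codeN S = codeN T) : S.max' hS = T.max' hT := by
  rcases lt_trichotomy (S.max' hS) (T.max' hT) with hlt | heq | hgt
  · exfalso
    have h1 : 2 ^ (T.max' hT) ≤ codeN T := two_pow_le_codeN (T.max'_mem hT)
    have h2 : codeN S < 2 ^ (S.max' hS + 1) :=
      codeN_lt (fun i hi => Nat.lt_succ_of_le (S.le_max' i hi))
    have h3 : (2:ℕ) ^ (S.max' hS + 1) ≤ 2 ^ (T.max' hT) :=
      Nat.pow_le_pow_right (by omega) (by omega)
    omega
  · exact heq
  · exfalso
    have h1 : 2 ^ (S.max' hS) ≤ codeN S := two_pow_le_codeN (S.max'_mem hS)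
    have h2 : codeN T < 2 ^ (T.max' hT + 1) :=
      codeN_lt (fun i hi => Nat.lt_succ_of_le (T.le_max' i hi))
    have h3 : (2:ℕ) ^ (T.max' hT + 1) ≤ 2 ^ (S.max' hS) :=
      Nat.pow_le_pow_right (by omega) (by omega)
    omega

lemma codeN_injective_aux : ∀ (k : ℕ) (S T : Finset ℕ), codeN S ≤ k → codeN S = codeN T → S = T := by
  intro k
  induction k using Nat.strong_induction_on with
  | _ k IH =>
    intro S T hk h
    by_cases hS : S = ∅
    · subst hS
      simp only [codeN, Finset.sum_empty] at h
      exact (codeN_eq_zero h.symm).symm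
    by_cases hT : T = ∅
    · subst hT
      simp only [codeN, Finset.sum_empty] at h
      exact codeN_eq_zero h
    have hSne : S.Nonempty := Finset.nonempty_iff_ne_empty.2 hS
    have hTne : T.Nonempty := Finset.nonempty_iff_ne_empty.2 hT
    have hmax := codeN_max_eq hSne hTne h
    set a := S.max' hSne with ha
    have haS : a ∈ S := S.max'_mem hSne
    have haT : a ∈ T := hmax ▸ T.max'_mem hTne
    have hSsum : codeN (S.erase a) + 2^a = codeN S := by
      rw [codeN, codeN, Finset.sum_erase_add _ _ haS]
    have hTsum : codeN (T.erase a) + 2^a = codeN T := by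
      rw [codeN, codeN, Finset.sum_erase_add _ _ haT]
    have hpos : 1 ≤ 2^a := Nat.one_le_two_pow
    have heq : codeN (S.erase a) = codeN (T.erase a) := by omega
    have hlt : codeN (S.erase a) < k := by omega
    have := IH (codeN (S.erase a)) hlt (S.erase a) (T.erase a) le_rfl heq
    have h1 := Finset.insert_erase haS
    have h2 := Finset.insert_erase haT
    rw [← h1, ← h2, this]

lemma codeN_injective : Function.Injective codeN := fun S T h =>
  codeN_injective_aux (codeN S) S T le_rfl h

def Ncode {n : ℕ} (S : Finset (Fin n)) : ℕ :=
  S.card * 2^n + codeN (S.image Fin.val)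

lemma Ncode_le_of_subset {n : ℕ} {S T : Finset (Fin n)} (h : S ⊆ T) : Ncode S ≤ Ncode T :=
  Nat.add_le_add (Nat.mul_le_mul_right _ (Finset.card_le_card h))
    (codeN_mono (Finset.image_subset_image h))

lemma Ncode_lt_of_card_lt {n : ℕ} {S T : Finset (Fin n)} (h : S.card < T.card) :
    Ncode S < Ncode T := by
  have h1 : codeN (S.image Fin.val) < 2^n :=
    codeN_lt (by rintro i hi; obtain ⟨j, _, rfl⟩ := Finset.mem_image.1 hi; exact j.2)
  have : S.card * 2^n + 2^n ≤ T.card * 2^n := by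
    have h2 : (S.card + 1) * 2^n ≤ T.card * 2^n := Nat.mul_le_mul_right _ (by omega)
    rw [add_mul, one_mul] at h2
    omega
  unfold Ncode; omega

lemma Ncode_injective {n : ℕ} : Function.Injective (Ncode (n := n)) := by
  intro S T h
  have h1 : codeN (S.image Fin.val) < 2^n :=
    codeN_lt (by rintro i hi; obtain ⟨j, _, rfl⟩ := Finset.mem_image.1 hi; exact j.2)
  have h2 : codeN (T.image Fin.val) < 2^n :=
    codeN_lt (by rintro i hi; obtain ⟨j, _, rfl⟩ := Finset.mem_image.1 hi; exact j.2)
  unfold Ncode at h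
  have hcard : S.card = T.card := by
    rcases lt_trichotomy S.card T.card with hc | hc | hc
    · exfalso
      have h3 := Nat.mul_le_mul_right (2^n) (show S.card + 1 ≤ T.card by omega)
      rw [add_mul, one_mul] at h3; omega
    · exact hc
    · exfalso
      have h3 := Nat.mul_le_mul_right (2^n) (show T.card + 1 ≤ S.card by omega)
      rw [add_mul, one_mul] at h3; omega
  have hcode : codeN (S.image Fin.val) = codeN (T.image Fin.val) := by
    rw [hcard] at h; omega
  have himg := codeN_injective hcode
  exact Finset.image_injective Fin.val_injective himg


/-! ### SF and the filtration -/

def SF {n : ℕ} {m : SimplexCategoryᵒᵖ} (α : (Δ[n] : SSet.{0}).obj m) : Finset (Fin (n+1)) :=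
  insert 0 (Finset.image (⇑(stdSimplex.asOrderHom α)) Finset.univ)

lemma zero_mem_SF {n : ℕ} {m : SimplexCategoryᵒᵖ} (α : (Δ[n] : SSet.{0}).obj m) :
    0 ∈ SF α := Finset.mem_insert_self _ _

lemma mem_SF_iff {n : ℕ} {m : SimplexCategoryᵒᵖ} {α : (Δ[n] : SSet.{0}).obj m}
    {v : Fin (n+1)} : v ∈ SF α ↔ v = 0 ∨ ∃ j, stdSimplex.asOrderHom α j = v := by
  simp [SF, Finset.mem_insert, Finset.mem_image]

lemma SF_map_subset {n : ℕ} {m m' : SimplexCategoryᵒᵖ} (g : m ⟶ m')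
    (α : (Δ[n] : SSet.{0}).obj m) : SF ((Δ[n] : SSet.{0}).map g α) ⊆ SF α := by
  intro v hv
  rcases mem_SF_iff.1 hv with h | ⟨j, hj⟩
  · exact h ▸ zero_mem_SF α
  · exact mem_SF_iff.2 (Or.inr ⟨g.unop.toOrderHom j, hj⟩)

lemma SF_eq_univ_iff {n : ℕ} {m : SimplexCategoryᵒᵖ} (α : (Δ[n] : SSet.{0}).obj m) :
    SF α = Finset.univ ↔ Set.range (stdSimplex.asOrderHom α) ∪ {(0 : Fin (n+1))} = Set.univ := by
  rw [Finset.eq_univ_iff_forall, Set.eq_univ_iff_forall]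
  apply forall_congr'
  intro v
  rw [mem_SF_iff]
  simp [Set.mem_union, Set.mem_range, or_comm, eq_comm]

def Xsub (n t : ℕ) : Subfunctor (Δ[n] : SSet.{0}) where
  obj m := {α | (SF α).card ≤ 2 ∨ Ncode (SF α) < t}
  map {m m'} g := by
    rintro α (h | h)
    · exact Or.inl (le_trans (Finset.card_le_card (SF_map_subset g α)) h)
    · exact Or.inr (lt_of_le_of_lt (Ncode_le_of_subset (SF_map_subset g α)) h)

lemma Xsub_mono (n : ℕ) {t t' : ℕ} (h : t ≤ t') : Xsub n t ≤ Xsub n t' := by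
  rintro m α (h' | h')
  · exact Or.inl h'
  · exact Or.inr (lt_of_lt_of_le h' h)

lemma cone_eq_X0 {n : ℕ} (hn : 1 ≤ n) (m : SimplexCategoryᵒᵖ)
    (α : (Δ[n] : SSet.{0}).obj m) : α ∈ (coneSub n).obj m ↔ α ∈ (Xsub n 0).obj m := by
  constructor
  · rintro ⟨i, hi1, hin, h⟩
    left
    have hsub : SF α ⊆ insert 0 {(⟨i, by omega⟩ : Fin (n+1))} := by
      intro v hv
      rcases mem_SF_iff.1 hv with rfl | ⟨j, hj⟩
      · exact Finset.mem_insert_self _ _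
      · rcases h j with h' | h'
        · rw [← hj]; apply Finset.mem_insert.2; left; exact Fin.ext h'
        · rw [← hj]; apply Finset.mem_insert.2; right
          apply Finset.mem_singleton.2; exact Fin.ext h'
    calc (SF α).card ≤ _ := Finset.card_le_card hsub
      _ ≤ 2 := by apply le_trans (Finset.card_insert_le _ _); simp
  · rintro (h | h)
    · by_cases hz : ∀ j, stdSimplex.asOrderHom α j = 0
      · exact ⟨1, le_refl _, hn, fun j => Or.inl (by rw [hz j]; rfl)⟩
      · push_neg at hz
        obtain ⟨j0, hj0⟩ := hz
        set v := stdSimplex.asOrderHom α j0 with hv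
        have hv0' : v.val ≠ 0 := fun h => hj0 (Fin.ext (by rw [h]; simp))
        refine ⟨v.val, by omega, v.is_le, fun j => ?_⟩
        by_contra hcon
        push_neg at hcon
        obtain ⟨h1, h2⟩ := hcon
        set w := stdSimplex.asOrderHom α j with hw
        have hsub : ({0, v, w} : Finset (Fin (n+1))) ⊆ SF α := by
          intro x hx
          simp only [Finset.mem_insert, Finset.mem_singleton] at hx
          rcases hx with rfl | rfl | rfl
          · exact zero_mem_SF α
          · exact mem_SF_iff.2 (Or.inr ⟨j0, rfl⟩)
          · exact mem_SF_iff.2 (Or.inr ⟨j, rfl⟩)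
        have hv0 : v ≠ 0 := hj0
        have hw0 : w ≠ 0 := fun hh => h1 (by rw [hh]; rfl)
        have hwv : w ≠ v := fun hh => h2 (by rw [hh])
        have hcard : ({0, v, w} : Finset (Fin (n+1))).card = 3 := by
          rw [Finset.card_insert_of_notMem (by simp [Ne.symm hv0, Ne.symm hw0]),
            Finset.card_insert_of_notMem (by simp only [Finset.mem_singleton]; exact fun h => hwv h.symm), Finset.card_singleton]
        have := Finset.card_le_card hsub
        omega
    · omega

lemma X_top {n t : ℕ} (ht : Ncode (Finset.univ : Finset (Fin (n+1))) < t)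
    (m : SimplexCategoryᵒᵖ) (α : (Δ[n] : SSet.{0}).obj m) : α ∈ (Xsub n t).obj m :=
  Or.inr (lt_of_le_of_lt (Ncode_le_of_subset (Finset.subset_univ _)) ht)

lemma X_horn {n : ℕ} (hn : 2 ≤ n) (m : SimplexCategoryᵒᵖ) (α : (Δ[n] : SSet.{0}).obj m) :
    α ∈ (Xsub n (Ncode (Finset.univ : Finset (Fin (n+1))))).obj m ↔ SF α ≠ Finset.univ := by
  constructor
  · rintro (h | h) huniv
    · rw [huniv, Finset.card_univ, Fintype.card_fin] at h; omega
    · rw [huniv] at h; omega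
  · intro h
    exact Or.inr (Ncode_lt_of_card_lt (Finset.card_lt_card ⟨Finset.subset_univ _, fun hc => h (Finset.Subset.antisymm (Finset.subset_univ _) hc)⟩))

/-! ### A pointwise criterion for pushouts in `SSet` -/

lemma deltaExt {k : ℕ} {m : SimplexCategoryᵒᵖ} {β β' : (Δ[k] : SSet.{0}).obj m}
    (h : ∀ j, stdSimplex.asOrderHom β j = stdSimplex.asOrderHom β' j) : β = β' := by
  apply ULift.ext
  apply SimplexCategory.Hom.ext
  exact OrderHom.ext _ _ (funext h)

noncomputable def typePushoutIsColimit {Z X Y W : Type} {f : Z ⟶ X} {g : Z ⟶ Y}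
    {h : X ⟶ W} {i : Y ⟶ W} (w : f ≫ h = g ≫ i)
    (hinj : Function.Injective h) (iinj : Function.Injective i)
    (surj : ∀ x : W, (∃ a, h a = x) ∨ (∃ b, i b = x))
    (inter : ∀ a b, h a = i b → ∃ z, f z = a ∧ g z = b) :
    IsColimit (PushoutCocone.mk h i w) := by
  classical
  have cond : ∀ (s : PushoutCocone f g) (z : Z), s.inl (f z) = s.inr (g z) :=
    fun s z => ConcreteCategory.congr_hom s.condition z
  refine PushoutCocone.IsColimit.mk w
    (fun s => ↾fun x => if hx : ∃ a, h a = x then s.inl hx.choose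
      else s.inr ((surj x).resolve_left hx).choose) ?_ ?_ ?_
  · intro s
    refine ConcreteCategory.hom_ext _ _ (fun a => ?_)
    have hx : ∃ a', h a' = h a := ⟨a, rfl⟩
    simp only [types_comp_apply, TypeCat.ofHom_apply, dif_pos hx]
    rw [hinj hx.choose_spec]
  · intro s
    refine ConcreteCategory.hom_ext _ _ (fun b => ?_)
    simp only [types_comp_apply, TypeCat.ofHom_apply]
    by_cases hx : ∃ a, h a = i b
    · rw [dif_pos hx]
      obtain ⟨z, hz1, hz2⟩ := inter hx.choose b hx.choose_spec
      rw [← hz1, cond s z, hz2]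
    · rw [dif_neg hx]
      exact congrArg s.inr (iinj ((surj (i b)).resolve_left hx).choose_spec)
  · intro s mdesc hm1 hm2
    refine ConcreteCategory.hom_ext _ _ (fun x => ?_)
    rcases surj x with ⟨a, rfl⟩ | ⟨b, rfl⟩
    · have hx : ∃ a', h a' = h a := ⟨a, rfl⟩
      simp only [TypeCat.ofHom_apply, dif_pos hx]
      rw [hinj hx.choose_spec]
      exact ConcreteCategory.congr_hom hm1 a
    · by_cases hx : ∃ a, h a = i b
      · simp only [TypeCat.ofHom_apply, dif_pos hx]
        obtain ⟨z, hz1, hz2⟩ := inter hx.choose b hx.choose_spec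
        rw [← hz1, cond s z, hz2]
        exact ConcreteCategory.congr_hom hm2 b
      · simp only [TypeCat.ofHom_apply, dif_neg hx]
        rw [iinj ((surj (i b)).resolve_left hx).choose_spec]
        exact ConcreteCategory.congr_hom hm2 b

lemma ssetIsPushout {Z X Y W : SSet.{0}} {f : Z ⟶ X} {g : Z ⟶ Y} {h : X ⟶ W} {i : Y ⟶ W}
    (w : f ≫ h = g ≫ i)
    (hinj : ∀ m, Function.Injective (h.app m)) (iinj : ∀ m, Function.Injective (i.app m))
    (surj : ∀ m x, (∃ a, h.app m a = x) ∨ (∃ b, i.app m b = x))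
    (inter : ∀ m a b, h.app m a = i.app m b → ∃ z, f.app m z = a ∧ g.app m z = b) :
    IsPushout f g h i := by
  refine IsPushout.of_isColimit' ⟨w⟩ ?_
  apply evaluationJointlyReflectsColimits
  intro m
  exact (isColimitMapCoconePushoutCoconeEquiv ((evaluation _ _).obj m) w).symm
    (typePushoutIsColimit _ (hinj m) (iinj m) (surj m) (inter m))

/-! ### Attaching a cell -/

section Cell

variable {n : ℕ} (T : Finset (Fin (n+1))) {k : ℕ}

def cellHom (hk : T.card = k + 1) : Fin (k+1) →o Fin (n+1) :=
  ⟨fun j => ((T.orderIsoOfFin hk) j : Fin (n+1)),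
    fun a b hab => Subtype.coe_le_coe.2 ((T.orderIsoOfFin hk).monotone hab)⟩

lemma cellHom_injective (hk : T.card = k + 1) : Function.Injective (cellHom T hk) :=
  fun a b hab => (T.orderIsoOfFin hk).injective (Subtype.ext hab)

lemma cellHom_mem (hk : T.card = k + 1) (j : Fin (k+1)) : cellHom T hk j ∈ T :=
  ((T.orderIsoOfFin hk) j).2

lemma cellHom_zero (hT0 : (0 : Fin (n+1)) ∈ T) (hk : T.card = k + 1) :
    cellHom T hk 0 = 0 := by
  refine le_antisymm ?_ (Fin.zero_le _)
  have h1 : (0 : Fin (k+1)) ≤ (T.orderIsoOfFin hk).symm ⟨0, hT0⟩ := Fin.zero_le _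
  have h2 := (T.orderIsoOfFin hk).monotone h1
  rw [OrderIso.apply_symm_apply] at h2
  exact h2

lemma cellHom_image_univ (hk : T.card = k + 1) :
    Finset.image (cellHom T hk) Finset.univ = T := by
  apply Finset.eq_of_subset_of_card_le
  · intro x hx
    obtain ⟨j, _, rfl⟩ := Finset.mem_image.1 hx
    exact cellHom_mem T hk j
  · rw [Finset.card_image_of_injective _ (cellHom_injective T hk), Finset.card_univ,
      Fintype.card_fin, hk]

def cellσ (hk : T.card = k + 1) : (Δ[k] : SSet.{0}) ⟶ (Δ[n] : SSet.{0}) :=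
  SSet.stdSimplex.map (SimplexCategory.mkHom (cellHom T hk))

lemma stdSimplex.asOrderHom_cellσ (hk : T.card = k + 1) {m : SimplexCategoryᵒᵖ}
    (β : (Δ[k] : SSet.{0}).obj m) (j) :
    stdSimplex.asOrderHom ((cellσ T hk).app m β) j = cellHom T hk (stdSimplex.asOrderHom β j) := rfl

lemma SF_cellσ (hT0 : (0 : Fin (n+1)) ∈ T) (hk : T.card = k + 1) {m : SimplexCategoryᵒᵖ}
    (β : (Δ[k] : SSet.{0}).obj m) :
    SF ((cellσ T hk).app m β) = (SF β).image (cellHom T hk) := by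
  unfold SF
  rw [Finset.image_insert, cellHom_zero T hT0 hk, Finset.image_image]
  congr 1

lemma cellσ_app_injective (hk : T.card = k + 1) (m : SimplexCategoryᵒᵖ) :
    Function.Injective ((cellσ T hk).app m) := by
  intro β β' hb
  apply deltaExt
  intro j
  apply cellHom_injective T hk
  rw [← stdSimplex.asOrderHom_cellσ, ← stdSimplex.asOrderHom_cellσ, hb]

def cellAttach (hT0 : (0 : Fin (n+1)) ∈ T) (hk : T.card = k + 1) :
    (Λ[k, 0] : SSet.{0}) ⟶ (Xsub n (Ncode T)).toFunctor where
  app m := ↾fun β => ⟨(cellσ T hk).app m β.1, by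
    right
    rw [SF_cellσ T hT0 hk]
    apply Ncode_lt_of_card_lt
    rw [Finset.card_image_of_injective _ (cellHom_injective T hk), hk]
    have hne : SF β.1 ≠ Finset.univ := fun hu => β.2 ((SF_eq_univ_iff β.1).1 hu)
    have := Finset.card_lt_card ⟨Finset.subset_univ (SF β.1),
      fun hc => hne (Finset.Subset.antisymm (Finset.subset_univ _) hc)⟩
    rw [Finset.card_univ, Fintype.card_fin] at this
    exact this⟩
  naturality m m' g := by
    ext β
    apply Subtype.ext
    exact NatTrans.naturality_apply (cellσ T hk) g β.1

def cellTop (hT0 : (0 : Fin (n+1)) ∈ T) (hk : T.card = k + 1) :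
    (Δ[k] : SSet.{0}) ⟶ (Xsub n (Ncode T + 1)).toFunctor where
  app m := ↾fun β => ⟨(cellσ T hk).app m β, by
    right
    rw [SF_cellσ T hT0 hk]
    have : (SF β).image (cellHom T hk) ⊆ T := by
      intro x hx
      obtain ⟨j, _, rfl⟩ := Finset.mem_image.1 hx
      exact cellHom_mem T hk j
    exact lt_of_le_of_lt (Ncode_le_of_subset this) (Nat.lt_succ_self _)⟩
  naturality m m' g := by
    ext β
    apply Subtype.ext
    exact NatTrans.naturality_apply (cellσ T hk) g β

lemma cell_isPushout (hT0 : (0 : Fin (n+1)) ∈ T) (hk : T.card = k + 1) (hk3 : 3 ≤ T.card) :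
    IsPushout (Λ[k, 0].ι) (cellAttach T hT0 hk) (cellTop T hT0 hk)
      (Subfunctor.homOfLe (Xsub_mono n (Nat.le_succ (Ncode T)))) := by
  apply ssetIsPushout
  · apply NatTrans.ext
    funext m; ext β
    apply Subtype.ext
    rfl
  · intro m β β' hb
    have h2 : (cellσ T hk).app m β = (cellσ T hk).app m β' := congrArg (fun t => t.1) hb
    exact cellσ_app_injective T hk m h2
  · intro m x y hxy
    have h2 : x.1 = y.1 := congrArg (fun t => t.1) hxy
    exact Subtype.ext h2
  · intro m x
    by_cases hx : x.1 ∈ (Xsub n (Ncode T)).obj m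
    · exact Or.inr ⟨⟨x.1, hx⟩, Subtype.ext rfl⟩
    · left
      have hT : SF x.1 = T := by
        rcases x.2 with h | h
        · exact absurd (Or.inl h) hx
        · rcases Nat.lt_or_ge (Ncode (SF x.1)) (Ncode T) with h' | h'
          · exact absurd (Or.inr h') hx
          · exact Ncode_injective (le_antisymm (by omega) h')
      have hmem : ∀ j, stdSimplex.asOrderHom x.1 j ∈ T := by
        intro j
        have hj : stdSimplex.asOrderHom x.1 j ∈ SF x.1 := mem_SF_iff.2 (Or.inr ⟨j, rfl⟩)
        rwa [hT] at hj
      refine ⟨stdSimplex.objMk ⟨fun j => (T.orderIsoOfFin hk).symm ⟨stdSimplex.asOrderHom x.1 j, hmem j⟩,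
        fun a b hab => (T.orderIsoOfFin hk).symm.monotone
          (Subtype.mk_le_mk.2 ((stdSimplex.asOrderHom x.1).monotone hab))⟩, ?_⟩
      apply Subtype.ext
      apply deltaExt
      intro j
      show cellHom T hk _ = _
      show ((T.orderIsoOfFin hk) ((T.orderIsoOfFin hk).symm ⟨stdSimplex.asOrderHom x.1 j, hmem j⟩) : Fin (n+1)) = _
      rw [OrderIso.apply_symm_apply]
  · intro m β x he
    have hval : (cellσ T hk).app m β = x.1 := congrArg (fun t => t.1) he
    have hne : SF β ≠ Finset.univ := by
      intro hu
      have : SF x.1 = T := by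
        rw [← hval, SF_cellσ T hT0 hk, hu, cellHom_image_univ T hk]
      rcases x.2 with h | h
      · rw [this, hk] at h; omega
      · rw [this] at h; omega
    refine ⟨⟨β, fun hu => hne ((SF_eq_univ_iff β).2 hu)⟩, rfl, ?_⟩
    exact Subtype.ext hval

end Cell

/-! ### The filtration argument -/

lemma homOfLe_trans {C : Type*} [Category C] {F : Cᵒᵖ ⥤ Type} {G G' G'' : Subfunctor F}
    (h : G ≤ G') (h' : G' ≤ G'') :
    Subfunctor.homOfLe h ≫ Subfunctor.homOfLe h' = Subfunctor.homOfLe (le_trans h h') := rfl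

lemma isIso_homOfLe_of_le {C : Type*} [Category C] {F : Cᵒᵖ ⥤ Type} {G G' : Subfunctor F}
    (h : G ≤ G') (h' : G' ≤ G) : IsIso (Subfunctor.homOfLe h) := by
  refine ⟨Subfunctor.homOfLe h', ?_, ?_⟩ <;>
    · apply NatTrans.ext
      funext m; ext x
      apply Subtype.ext
      rfl

lemma monoOfInjectiveApp {X Y : SSet.{0}} (f : X ⟶ Y)
    (h : ∀ m, Function.Injective (f.app m)) : Mono f := by
  constructor
  intro W g g' e
  apply NatTrans.ext
  funext m; ext x
  exact h m (ConcreteCategory.congr_hom (congr_app e m) x)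

lemma compA {A : MorphismProperty SSet.{0}} (hA : IsSaturated A) (n : ℕ) (t : ℕ)
    (hh : ∀ T : Finset (Fin (n+1)), 0 ∈ T → 3 ≤ T.card → Ncode T < t →
      A (Λ[(T.card - 1), 0].ι)) :
    A (Subfunctor.homOfLe (Xsub_mono n (Nat.zero_le t))) := by
  induction t with
  | zero =>
    have := isIso_homOfLe_of_le (Xsub_mono n (Nat.zero_le 0)) (le_refl _)
    exact A_isIso hA _
  | succ t ih =>
    have step : A (Subfunctor.homOfLe (Xsub_mono n (Nat.le_succ t))) := by
      by_cases hex : ∃ T : Finset (Fin (n+1)), 0 ∈ T ∧ 3 ≤ T.card ∧ Ncode T = t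
      · obtain ⟨T, hT0, h3, ht⟩ := hex
        have hk : T.card = (T.card - 1) + 1 := by omega
        subst ht
        exact hA.pushout _ _ _ _ (cell_isPushout T hT0 hk h3)
          (hh T hT0 h3 (Nat.lt_succ_self _))
      · push_neg at hex
        have hback : Xsub n (t+1) ≤ Xsub n t := by
          rintro m α (h | h)
          · exact Or.inl h
          · rcases Nat.lt_or_ge (Ncode (SF α)) t with h' | h'
            · exact Or.inr h'
            · have hEq : Ncode (SF α) = t := by omega
              by_cases hc : (SF α).card ≤ 2
              · exact Or.inl hc
              · exact absurd hEq (hex (SF α) (zero_mem_SF α) (by omega))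
        have := isIso_homOfLe_of_le (Xsub_mono n (Nat.le_succ t)) hback
        exact A_isIso hA _
    have hcomp := A_comp hA (ih (fun T h0 h3 hlt => hh T h0 h3 (Nat.lt_succ_of_lt hlt))) step
    rw [homOfLe_trans] at hcomp
    exact hcomp

def hornIso (n : ℕ) (hn : 2 ≤ n) :
    (Xsub n (Ncode (Finset.univ : Finset (Fin (n+1))))).toFunctor ≅ (Λ[n, 0] : SSet.{0}) where
  hom :=
    { app := fun m => ↾fun x => ⟨x.1, fun hu => ((X_horn hn m x.1).1 x.2) ((SF_eq_univ_iff x.1).2 hu)⟩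
      naturality := fun m m' g => by ext x; apply Subtype.ext; rfl }
  inv :=
    { app := fun m => ↾fun y => ⟨y.1, (X_horn hn m y.1).2 (fun hu => y.2 ((SF_eq_univ_iff y.1).1 hu))⟩
      naturality := fun m m' g => by ext y; apply Subtype.ext; rfl }
  hom_inv_id := by apply NatTrans.ext; funext m; ext x; apply Subtype.ext; rfl
  inv_hom_id := by apply NatTrans.ext; funext m; ext y; apply Subtype.ext; rfl

def topIso (n : ℕ) :
    (Xsub n (Ncode (Finset.univ : Finset (Fin (n+1))) + 1)).toFunctor ≅ (Δ[n] : SSet.{0}) where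
  hom := (Xsub n (Ncode (Finset.univ : Finset (Fin (n+1))) + 1)).ι
  inv :=
    { app := fun m => ↾fun α => ⟨α, X_top (Nat.lt_succ_self _) m α⟩
      naturality := fun m m' g => by ext α; apply Subtype.ext; rfl }
  hom_inv_id := by apply NatTrans.ext; funext m; ext x; apply Subtype.ext; rfl
  inv_hom_id := by apply NatTrans.ext; funext m; ext α; rfl

end Statement2Aux

/-- Let `A` be a saturated class of morphisms of simplicial sets with the right
cancellation property for monomorphisms. Then `A` contains all left horn inclusions
`h^n_0 : Λ[n,0] → Δ[n]`, `n ≥ 2`, if and only if `A` contains all left cone inclusions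
`c_n : C_n → Δ[n]`, `n ≥ 2`. -/
theorem leftHorns_iff_leftCones (A : MorphismProperty SSet.{0})
    (hA : IsSaturated A) (hrc : RightCancel A) :
    (∀ n : ℕ, 2 ≤ n → A (Λ[n, 0].ι)) ↔ (∀ n : ℕ, 2 ≤ n → A ((coneSub n).ι)) := by
  constructor
  · intro hhorn n hn
    have hcomp : A (Subfunctor.homOfLe (Xsub_mono n
        (Nat.zero_le (Ncode (Finset.univ : Finset (Fin (n+1))) + 1)))) :=
      compA hA n _ (fun T h0 h3 _ => hhorn (T.card - 1) (by omega))
    have hX0ι : A ((Xsub n 0).ι) := by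
      have hiso : IsIso ((Xsub n (Ncode (Finset.univ : Finset (Fin (n+1))) + 1)).ι) :=
        ⟨(topIso n).inv, (topIso n).hom_inv_id, (topIso n).inv_hom_id⟩
      have := A_comp hA hcomp
        (A_isIso hA ((Xsub n (Ncode (Finset.univ : Finset (Fin (n+1))) + 1)).ι))
      rwa [Subfunctor.homOfLe_ι] at this
    have hle1 : coneSub n ≤ Xsub n 0 := fun m α h => (cone_eq_X0 (by omega) m α).1 h
    have hle2 : Xsub n 0 ≤ coneSub n := fun m α h => (cone_eq_X0 (by omega) m α).2 h
    have hiso2 := isIso_homOfLe_of_le hle1 hle2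
    have := A_comp hA (A_isIso hA (Subfunctor.homOfLe hle1)) hX0ι
    rwa [Subfunctor.homOfLe_ι] at this
  · intro hcone n
    induction n using Nat.strong_induction_on with
    | _ n IH =>
      intro hn
      have hcomp : A (Subfunctor.homOfLe (Xsub_mono n
          (Nat.zero_le (Ncode (Finset.univ : Finset (Fin (n+1))))))) := by
        apply compA hA
        intro T h0 h3 hlt
        have hTle : T.card ≤ n + 1 := le_trans (Finset.card_le_card (Finset.subset_univ T))
          (by rw [Finset.card_univ, Fintype.card_fin])
        have hTne : T.card ≠ n + 1 := by
          intro hc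
          have hTu : T = Finset.univ :=
            Finset.eq_univ_of_card T (by rw [hc, Fintype.card_fin])
          rw [hTu] at hlt
          omega
        exact IH (T.card - 1) (by omega) (by omega)
      -- the inclusion of the cone into the horn lies in A
      have hle1 : coneSub n ≤ Xsub n 0 := fun m α h => (cone_eq_X0 (by omega) m α).1 h
      have hle2 : Xsub n 0 ≤ coneSub n := fun m α h => (cone_eq_X0 (by omega) m α).2 h
      have hueq : coneToHorn n hn = Subfunctor.homOfLe hle1 ≫
          Subfunctor.homOfLe (Xsub_mono n (Nat.zero_le _)) ≫ (hornIso n hn).hom := by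
        apply NatTrans.ext
        funext m; ext α
        apply Subtype.ext
        rfl
      have hu : A (coneToHorn n hn) := by
        rw [hueq]
        have hiso1 := isIso_homOfLe_of_le hle1 hle2
        exact A_comp hA (A_isIso hA _) (A_comp hA hcomp (A_isIso hA _))
      have hmonoU : Mono (coneToHorn n hn) := by
        apply monoOfInjectiveApp
        intro m a b hab
        exact Subtype.ext (congrArg (fun t => t.1) hab)
      have hmonoH : Mono (Λ[n, 0].ι) := by
        apply monoOfInjectiveApp
        intro m a b hab
        exact Subtype.ext hab
      have hucomp : coneToHorn n hn ≫ Λ[n, 0].ι = (coneSub n).ι := by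
        apply NatTrans.ext
        funext m; ext α
        rfl
      exact hrc (coneToHorn n hn) (Λ[n, 0].ι) hmonoU hmonoH
        (hucomp ▸ hcone n hn) hu


end BousfieldPaper
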